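/- For all a, b > 0 with a ≠ b, the double inequality p·D(a,b) + (1−p)·H(a,b) < Q(a,b) < q·D(a,b) + (1−q)·H(a,b) holds if and only if p ≤ 1/2 and q ≥ √2/2. -/

import Mathlib

noncomputable def harmonicMean (a b : ℝ) : ℝ := 2 * a * b / (a + b)

noncomputable def quadraticMean (a b : ℝ) : ℝ := Real.sqrt ((a ^ 2 + b ^ 2) / 2)

noncomputable def contraD (a b : ℝ) : ℝ := (a ^ 3 + b ^ 3) / (a ^ 2 + b ^ 2)

lemma hm_pos {a b : ℝ} (ha : 0 < a) (hb : 0 < b) : 0 < harmonicMean a b := by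
  unfold harmonicMean; positivity

lemma qm_pos {a b : ℝ} (ha : 0 < a) (hb : 0 < b) : 0 < quadraticMean a b := by
  unfold quadraticMean
  exact Real.sqrt_pos.mpr (by positivity)

lemma qm_sq {a b : ℝ} (ha : 0 < a) (hb : 0 < b) :
    quadraticMean a b ^ 2 = (a ^ 2 + b ^ 2) / 2 := by
  unfold quadraticMean
  rw [Real.sq_sqrt (by positivity)]

lemma dh_sub {a b : ℝ} (ha : 0 < a) (hb : 0 < b) :
    contraD a b - harmonicMean a b
      = (a - b) ^ 2 * (a ^ 2 + a * b + b ^ 2) / ((a ^ 2 + b ^ 2) * (a + b)) := by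
  unfold contraD harmonicMean
  field_simp
  ring

lemma dh_pos {a b : ℝ} (ha : 0 < a) (hb : 0 < b) (hne : a ≠ b) :
    0 < contraD a b - harmonicMean a b := by
  rw [dh_sub ha hb]
  have h0 : a - b ≠ 0 := sub_ne_zero.mpr hne
  positivity

/-- key inequality for the p-side: D + H < 2 Q -/
lemma key1 {a b : ℝ} (ha : 0 < a) (hb : 0 < b) (hne : a ≠ b) :
    contraD a b + harmonicMean a b < 2 * quadraticMean a b := by
  have hq2 := qm_sq ha hb
  have hqpos := qm_pos ha hb
  have hdpos : 0 < contraD a b := by unfold contraD; positivity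
  have hhpos := hm_pos ha hb
  have hsum : contraD a b + harmonicMean a b
      = (a ^ 4 + 3 * a ^ 3 * b + 3 * a * b ^ 3 + b ^ 4) / ((a ^ 2 + b ^ 2) * (a + b)) := by
    unfold contraD harmonicMean
    field_simp
    ring
  have h0 : a - b ≠ 0 := sub_ne_zero.mpr hne
  have hkey : 2 * (a ^ 2 + b ^ 2) * ((a ^ 2 + b ^ 2) * (a + b)) ^ 2
      - (a ^ 4 + 3 * a ^ 3 * b + 3 * a * b ^ 3 + b ^ 4) ^ 2
      = (a - b) ^ 4 * (a ^ 4 + 2 * a ^ 3 * b + a ^ 2 * b ^ 2 + 2 * a * b ^ 3 + b ^ 4) := by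
    ring
  have hkeypos : 0 < (a - b) ^ 4 * (a ^ 4 + 2 * a ^ 3 * b + a ^ 2 * b ^ 2 + 2 * a * b ^ 3 + b ^ 4) := by
    positivity
  have hsq : (contraD a b + harmonicMean a b) ^ 2 < (2 * quadraticMean a b) ^ 2 := by
    have h2q : (2 * quadraticMean a b) ^ 2 = 2 * (a ^ 2 + b ^ 2) := by
      rw [mul_pow, hq2]; ring
    rw [hsum, h2q, div_pow, div_lt_iff₀ (by positivity)]
    nlinarith [hkeypos, hkey]
  exact lt_of_pow_lt_pow_left₀ 2 (by positivity) hsq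

/-- rational identity behind the q-side -/
lemma id2 {a b : ℝ} (ha : 0 < a) (hb : 0 < b) :
    2 * (harmonicMean a b) ^ 2 * (contraD a b - harmonicMean a b) ^ 2
      - ((a ^ 2 + b ^ 2) / 2 - (harmonicMean a b) ^ 2
          - (contraD a b - harmonicMean a b) ^ 2 / 2) ^ 2
      = (a - b) ^ 4 * (a ^ 2 * b ^ 2 *
          (16 * a ^ 8 + 40 * a ^ 7 * b + 71 * a ^ 6 * b ^ 2 + 108 * a ^ 5 * b ^ 3
            + 106 * a ^ 4 * b ^ 4 + 108 * a ^ 3 * b ^ 5 + 71 * a ^ 2 * b ^ 6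
            + 40 * a * b ^ 7 + 16 * b ^ 8))
        / (4 * ((a ^ 2 + b ^ 2) * (a + b)) ^ 4) := by
  unfold contraD harmonicMean
  field_simp
  ring

/-- key inequality for the q-side: Q < (√2/2) D + (1 - √2/2) H -/
lemma key2 {a b : ℝ} (ha : 0 < a) (hb : 0 < b) (hne : a ≠ b) :
    quadraticMean a b < Real.sqrt 2 / 2 * contraD a b
      + (1 - Real.sqrt 2 / 2) * harmonicMean a b := by
  have hs2 : Real.sqrt 2 ^ 2 = 2 := Real.sq_sqrt (by norm_num)
  have hs2pos : 0 < Real.sqrt 2 := Real.sqrt_pos.mpr (by norm_num)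
  have hq2 := qm_sq ha hb
  have hqpos := qm_pos ha hb
  have hhpos := hm_pos ha hb
  have hepos := dh_pos ha hb hne
  set hv := harmonicMean a b
  set dv := contraD a b
  set qv := quadraticMean a b
  have h0 : a - b ≠ 0 := sub_ne_zero.mpr hne
  have hmain := id2 ha hb
  have hnum : 0 < (a - b) ^ 4 * (a ^ 2 * b ^ 2 *
          (16 * a ^ 8 + 40 * a ^ 7 * b + 71 * a ^ 6 * b ^ 2 + 108 * a ^ 5 * b ^ 3
            + 106 * a ^ 4 * b ^ 4 + 108 * a ^ 3 * b ^ 5 + 71 * a ^ 2 * b ^ 6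
            + 40 * a * b ^ 7 + 16 * b ^ 8))
        / (4 * ((a ^ 2 + b ^ 2) * (a + b)) ^ 4) := by positivity
  have hlt : ((a ^ 2 + b ^ 2) / 2 - hv ^ 2 - (dv - hv) ^ 2 / 2) ^ 2
      < 2 * hv ^ 2 * (dv - hv) ^ 2 := by
    have := hmain
    linarith
  rw [← hq2] at hlt
  have hprod : 0 < Real.sqrt 2 * (hv * (dv - hv)) :=
    mul_pos hs2pos (mul_pos hhpos hepos)
  -- K < √2 * hv * (dv - hv)
  have hK : qv ^ 2 - hv ^ 2 - (dv - hv) ^ 2 / 2 < Real.sqrt 2 * (hv * (dv - hv)) := by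
    rcases le_or_gt (qv ^ 2 - hv ^ 2 - (dv - hv) ^ 2 / 2) 0 with h | h
    · linarith
    · have hsq2 : (Real.sqrt 2 * (hv * (dv - hv))) ^ 2 = 2 * hv ^ 2 * (dv - hv) ^ 2 := by
        linear_combination (hv * (dv - hv)) ^ 2 * hs2
      have hlt2 : (qv ^ 2 - hv ^ 2 - (dv - hv) ^ 2 / 2) ^ 2
          < (Real.sqrt 2 * (hv * (dv - hv))) ^ 2 := by rw [hsq2]; exact hlt
      exact lt_of_pow_lt_pow_left₀ 2 hprod.le hlt2
  have hrhs : Real.sqrt 2 / 2 * dv + (1 - Real.sqrt 2 / 2) * hv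
      = hv + Real.sqrt 2 / 2 * (dv - hv) := by ring
  rw [hrhs]
  have hrhspos : 0 < hv + Real.sqrt 2 / 2 * (dv - hv) := by
    have : 0 < Real.sqrt 2 / 2 * (dv - hv) := by positivity
    linarith
  refine lt_of_pow_lt_pow_left₀ 2 hrhspos.le ?_
  have hexp : (hv + Real.sqrt 2 / 2 * (dv - hv)) ^ 2
      = hv ^ 2 + Real.sqrt 2 * (hv * (dv - hv)) + (dv - hv) ^ 2 / 2 := by
    linear_combination ((dv - hv) ^ 2 / 4) * hs2
  rw [hexp]
  linarith

/-- the continuous extension of the ratio (Q-H)/(D-H) with b = 1 -/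
noncomputable def Gfun (x : ℝ) : ℝ :=
  ((x ^ 2 + 4 * x + 1) * (x ^ 2 + 1))
    / (2 * (x + 1) * (x ^ 2 + x + 1) * (quadraticMean x 1 + harmonicMean x 1))

lemma id3 {x : ℝ} (hx : 0 < x) :
    ((x ^ 2 + 1) / 2 - (harmonicMean x 1) ^ 2) * (2 * (x + 1) * (x ^ 2 + x + 1))
      = ((x ^ 2 + 4 * x + 1) * (x ^ 2 + 1)) * (contraD x 1 - harmonicMean x 1) := by
  unfold contraD harmonicMean
  field_simp
  ring

lemma den_pos {x : ℝ} (hx : 0 < x) :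
    0 < 2 * (x + 1) * (x ^ 2 + x + 1) * (quadraticMean x 1 + harmonicMean x 1) := by
  have h1 := qm_pos hx one_pos
  have h2 := hm_pos hx one_pos
  have : 0 < 2 * (x + 1) * (x ^ 2 + x + 1) := by positivity
  exact mul_pos this (by linarith)

lemma qsq1 {x : ℝ} (hx : 0 < x) : quadraticMean x 1 ^ 2 = (x ^ 2 + 1) / 2 := by
  have := qm_sq hx one_pos
  simpa using this

lemma qhden {x : ℝ} (hx : 0 < x) :
    (quadraticMean x 1 - harmonicMean x 1)
        * (2 * (x + 1) * (x ^ 2 + x + 1) * (quadraticMean x 1 + harmonicMean x 1))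
      = ((x ^ 2 + 4 * x + 1) * (x ^ 2 + 1)) * (contraD x 1 - harmonicMean x 1) := by
  have h1 : (quadraticMean x 1 - harmonicMean x 1)
        * (2 * (x + 1) * (x ^ 2 + x + 1) * (quadraticMean x 1 + harmonicMean x 1))
      = (quadraticMean x 1 ^ 2 - harmonicMean x 1 ^ 2) * (2 * (x + 1) * (x ^ 2 + x + 1)) := by
    ring
  rw [h1, qsq1 hx]
  exact id3 hx

lemma lt_Gfun {p x : ℝ} (hx : 0 < x) (hne : x ≠ 1)
    (h : p * contraD x 1 + (1 - p) * harmonicMean x 1 < quadraticMean x 1) :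
    p < Gfun x := by
  have hden := den_pos hx
  have he := dh_pos hx one_pos hne
  have hpe : p * (contraD x 1 - harmonicMean x 1)
      < quadraticMean x 1 - harmonicMean x 1 := by linarith
  rw [Gfun, lt_div_iff₀ hden]
  have h3 := mul_lt_mul_of_pos_right hpe hden
  rw [qhden hx] at h3
  have h4 : p * (2 * (x + 1) * (x ^ 2 + x + 1) * (quadraticMean x 1 + harmonicMean x 1))
        * (contraD x 1 - harmonicMean x 1)
      < (x ^ 2 + 4 * x + 1) * (x ^ 2 + 1) * (contraD x 1 - harmonicMean x 1) := by
    nlinarith [h3]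
  exact lt_of_mul_lt_mul_right h4 he.le

lemma gt_Gfun {q x : ℝ} (hx : 0 < x) (hne : x ≠ 1)
    (h : quadraticMean x 1 < q * contraD x 1 + (1 - q) * harmonicMean x 1) :
    Gfun x < q := by
  have hden := den_pos hx
  have he := dh_pos hx one_pos hne
  have hpe : quadraticMean x 1 - harmonicMean x 1
      < q * (contraD x 1 - harmonicMean x 1) := by linarith
  rw [Gfun, div_lt_iff₀ hden]
  have h3 := mul_lt_mul_of_pos_right hpe hden
  rw [qhden hx] at h3
  have h4 : (x ^ 2 + 4 * x + 1) * (x ^ 2 + 1) * (contraD x 1 - harmonicMean x 1)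
      < q * (2 * (x + 1) * (x ^ 2 + x + 1) * (quadraticMean x 1 + harmonicMean x 1))
        * (contraD x 1 - harmonicMean x 1) := by
    nlinarith [h3]
  exact lt_of_mul_lt_mul_right h4 he.le

lemma Gfun_contAt {x₀ : ℝ} (h0 : 0 ≤ x₀) : ContinuousAt Gfun x₀ := by
  have hc1 : ContinuousAt (fun x : ℝ => harmonicMean x 1) x₀ := by
    unfold harmonicMean
    exact ContinuousAt.div (by fun_prop) (by fun_prop) (by intro h; nlinarith)
  have hc2 : ContinuousAt (fun x : ℝ => quadraticMean x 1) x₀ := by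
    unfold quadraticMean
    exact Real.continuous_sqrt.continuousAt.comp (by fun_prop)
  have hQpos : 0 < quadraticMean x₀ 1 := by
    unfold quadraticMean
    exact Real.sqrt_pos.mpr (by positivity)
  have hHnn : 0 ≤ harmonicMean x₀ 1 := by
    unfold harmonicMean
    apply div_nonneg (by nlinarith) (by linarith)
  have hdenne : 2 * (x₀ + 1) * (x₀ ^ 2 + x₀ + 1)
      * (quadraticMean x₀ 1 + harmonicMean x₀ 1) ≠ 0 := by
    have h1 : 0 < 2 * (x₀ + 1) * (x₀ ^ 2 + x₀ + 1) := by positivity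
    exact (mul_pos h1 (by linarith)).ne'
  unfold Gfun
  exact ContinuousAt.div (by fun_prop)
    (ContinuousAt.mul (by fun_prop) (hc2.add hc1)) hdenne

lemma Gfun_one : Gfun 1 = 1 / 2 := by
  unfold Gfun quadraticMean harmonicMean
  norm_num

lemma Gfun_zero : Gfun 0 = Real.sqrt 2 / 2 := by
  unfold Gfun quadraticMean harmonicMean
  norm_num
  ring

theorem stmt_5 (p q : ℝ) :
    (∀ a b : ℝ, 0 < a → 0 < b → a ≠ b →
      p * contraD a b + (1 - p) * harmonicMean a b < quadraticMean a b ∧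
      quadraticMean a b < q * contraD a b + (1 - q) * harmonicMean a b) ↔
    (p ≤ 1 / 2 ∧ Real.sqrt 2 / 2 ≤ q) := by
  constructor
  · intro h
    constructor
    · -- p ≤ 1/2 via x_n = 1 + 1/(n+1) → 1
      have hlim : Filter.Tendsto (fun n : ℕ => (1 : ℝ) + 1 / (n + 1)) Filter.atTop (nhds 1) := by
        have := tendsto_one_div_add_atTop_nhds_zero_nat (𝕜 := ℝ)
        have h2 := (tendsto_const_nhds :
          Filter.Tendsto (fun _ : ℕ => (1:ℝ)) Filter.atTop (nhds 1)).add this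
        simpa using h2
      have hG : Filter.Tendsto (fun n : ℕ => Gfun (1 + 1 / (n + 1))) Filter.atTop (nhds (1 / 2)) := by
        have := (Gfun_contAt (by norm_num : (0:ℝ) ≤ 1)).tendsto.comp hlim
        rwa [Gfun_one] at this
      refine ge_of_tendsto' hG ?_
      intro n
      have hxpos : 0 < (1 : ℝ) + 1 / ((n : ℝ) + 1) := by positivity
      have hxne : (1 : ℝ) + 1 / ((n : ℝ) + 1) ≠ 1 := by
        have : (0:ℝ) < 1 / ((n : ℝ) + 1) := by positivity
        intro hcon; nlinarith
      exact (lt_Gfun hxpos hxne (h _ 1 hxpos one_pos hxne).1).le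
    · -- √2/2 ≤ q via x_n = 1/(n+2) → 0
      have hlim : Filter.Tendsto (fun n : ℕ => (1 : ℝ) / (n + 2)) Filter.atTop (nhds 0) := by
        have h1 := tendsto_one_div_add_atTop_nhds_zero_nat (𝕜 := ℝ)
        have h2 := h1.comp (Filter.tendsto_add_atTop_nat 1)
        have : (fun n : ℕ => (1:ℝ) / ((n + 1 : ℕ) + 1)) = fun n : ℕ => (1:ℝ) / (n + 2) := by
          funext n; push_cast; ring_nf
        rwa [Function.comp_def, this] at h2
      have hG : Filter.Tendsto (fun n : ℕ => Gfun (1 / (n + 2))) Filter.atTop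
          (nhds (Real.sqrt 2 / 2)) := by
        have := (Gfun_contAt (le_refl (0:ℝ))).tendsto.comp hlim
        rwa [Gfun_zero] at this
      refine le_of_tendsto' hG ?_
      intro n
      have hxpos : 0 < (1 : ℝ) / ((n : ℝ) + 2) := by positivity
      have hxne : (1 : ℝ) / ((n : ℝ) + 2) ≠ 1 := by
        have h2 : (1 : ℝ) / ((n : ℝ) + 2) < 1 := by
          rw [div_lt_one (by positivity)]
          have : (0:ℝ) ≤ (n:ℝ) := Nat.cast_nonneg n
          linarith
        exact ne_of_lt h2
      exact (gt_Gfun hxpos hxne (h _ 1 hxpos one_pos hxne).2).le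
  · rintro ⟨hp, hq⟩ a b ha hb hne
    have he := dh_pos ha hb hne
    constructor
    · have h1 := key1 ha hb hne
      nlinarith [mul_nonneg (by linarith : (0:ℝ) ≤ 1 / 2 - p) he.le]
    · have h2 := key2 ha hb hne
      nlinarith [mul_nonneg (by linarith : (0:ℝ) ≤ q - Real.sqrt 2 / 2) he.le]
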